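/- Let B = ⟨a,b,c | a² = 1, [a,a^b] = 1, [b,c] = 1, a^c = a·a^b⟩. Then the subgroup of B generated by a and b is isomorphic to the wreath product (ℤ/2ℤ) ≀ ℤ, via the map sending a to a generator of ℤ/2ℤ and b to a generator of ℤ. -/

import Mathlib

open Multiplicative

/-- Relators of `B = ⟨a,b,c ∣ a² = 1, [a,a^b] = 1, [b,c] = 1, a^c = a·a^b⟩`, where
`x^y = y⁻¹xy` and `[x,y] = x⁻¹y⁻¹xy`; generators `0 ↦ a`, `1 ↦ b`, `2 ↦ c`. -/
def Brels : Set (FreeGroup (Fin 3)) :=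
  let a := FreeGroup.of (0 : Fin 3)
  let b := FreeGroup.of (1 : Fin 3)
  let c := FreeGroup.of (2 : Fin 3)
  { a ^ 2,
    a⁻¹ * (b⁻¹ * a * b)⁻¹ * a * (b⁻¹ * a * b),
    b⁻¹ * c⁻¹ * b * c,
    (c⁻¹ * a * c)⁻¹ * (a * (b⁻¹ * a * b)) }

/-- Baumslag's metabelian group `B`. -/
def BGroup := PresentedGroup Brels

instance : Group BGroup := by unfold BGroup; infer_instance

/-- The shift action of `ℤ` on `⊕_{i∈ℤ} ℤ/2ℤ`. -/
noncomputable def shiftAction : Multiplicative ℤ →* MulAut (Multiplicative (ℤ →₀ ZMod 2)) :=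
  zpowersHom _ (AddEquiv.toMultiplicative (Finsupp.domCongr (Equiv.addRight (1 : ℤ))))

/-- The wreath product `(ℤ/2ℤ) ≀ ℤ = (⊕_{i∈ℤ} ℤ/2ℤ) ⋊ ℤ`, with `ℤ` acting by shift. -/
def Wreath := SemidirectProduct (Multiplicative (ℤ →₀ ZMod 2)) (Multiplicative ℤ)
  shiftAction

noncomputable instance : Group Wreath := by unfold Wreath; infer_instance

/-! ### Generic commutation lemmas -/

namespace Waux

variable {G : Type*} [Group G] (a b c : G)
  (ha2 : a * a = 1) (hab : Commute a (b⁻¹ * a * b))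
  (hbc : b * c = c * b) (hac : c⁻¹ * a * c = a * (b⁻¹ * a * b))

/-- `α n = b^n a b^{-n}`. -/
def α (n : ℤ) : G := b ^ n * a * b ^ (-n)

lemma alpha_zero : α a b 0 = a := by simp [α]

lemma conj_alpha (k n : ℤ) : b ^ k * α a b n * (b ^ k)⁻¹ = α a b (n + k) := by
  simp only [α]; group

lemma comm_shift {i j : ℤ} (h : Commute (α a b i) (α a b j)) (i' j' : ℤ)
    (hd : j' - i' = j - i) : Commute (α a b i') (α a b j') := by
  have h2 := h.map (MulAut.conj (b ^ (i' - i))).toMonoidHom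
  simp only [MulEquiv.coe_toMonoidHom, MulAut.conj_apply, conj_alpha] at h2
  rwa [show i + (i' - i) = i' by ring, show j + (i' - i) = j' by omega] at h2

include hbc hac in
lemma conj_c (n : ℤ) : c⁻¹ * α a b n * c = α a b n * α a b (n - 1) := by
  have hbc' : Commute b c := hbc
  have h1 : c⁻¹ * b ^ n = b ^ n * c⁻¹ := ((hbc'.symm.zpow_right n).inv_left).eq
  have h2 : b ^ (-n) * c = c * b ^ (-n) := (hbc'.symm.zpow_right (-n)).eq.symm
  calc c⁻¹ * (b ^ n * a * b ^ (-n)) * c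
      = (c⁻¹ * b ^ n) * a * (b ^ (-n) * c) := by group
    _ = (b ^ n * c⁻¹) * a * (c * b ^ (-n)) := by rw [h1, h2]
    _ = b ^ n * (c⁻¹ * a * c) * b ^ (-n) := by group
    _ = b ^ n * (a * (b⁻¹ * a * b)) * b ^ (-n) := by rw [hac]
    _ = (b ^ n * a * b ^ (-n)) * (b ^ (n-1) * a * b ^ (-(n-1))) := by group

include ha2 hab hbc hac in
lemma comm_a_alpha_nat (n : ℕ) : Commute (α a b 0) (α a b (n : ℤ)) := by
  induction n using Nat.strong_induction_on with
  | _ n IH =>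
    match n with
    | 0 => exact Commute.refl _
    | 1 =>
      have h0 : Commute (α a b 0) (α a b (-1)) := by
        rw [alpha_zero]
        have : α a b (-1) = b⁻¹ * a * b := by simp only [α]; group
        rw [this]; exact hab
      exact (comm_shift a b h0 1 0 (by ring)).symm
    | (m+2) =>
      push_cast
      set M : ℤ := (m : ℤ) with hM
      have hA : Commute (α a b 0) (α a b M) := IH m (by omega)
      have hB : Commute (α a b 0) (α a b (M+1)) := by
        have := IH (m+1) (by omega); push_cast at this; exact this
      have k1 : Commute (α a b (-1)) (α a b M) := comm_shift a b hB (-1) M (by ring)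
      have hC : Commute (α a b 0 * α a b (-1)) (α a b (M+1) * α a b M) := by
        have h3 := hB.map (MulAut.conj c⁻¹).toMonoidHom
        simp only [MulEquiv.coe_toMonoidHom, MulAut.conj_apply, inv_inv] at h3
        rw [conj_c a b c hbc hac, conj_c a b c hbc hac] at h3
        rwa [show (0:ℤ) - 1 = -1 by ring, show M + 1 - 1 = M by ring] at h3
      have key : α a b 0 * (α a b (-1) * α a b (M+1)) * α a b M
          = α a b 0 * (α a b (M+1) * α a b (-1)) * α a b M := by
        calc α a b 0 * (α a b (-1) * α a b (M+1)) * α a b M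
            = (α a b 0 * α a b (-1)) * (α a b (M+1) * α a b M) := by group
          _ = (α a b (M+1) * α a b M) * (α a b 0 * α a b (-1)) := hC.eq
          _ = α a b (M+1) * (α a b M * α a b 0) * α a b (-1) := by group
          _ = α a b (M+1) * (α a b 0 * α a b M) * α a b (-1) := by rw [hA.eq]
          _ = (α a b (M+1) * α a b 0) * (α a b M * α a b (-1)) := by group
          _ = (α a b 0 * α a b (M+1)) * (α a b (-1) * α a b M) := by
              rw [hB.eq, k1.eq]
          _ = α a b 0 * (α a b (M+1) * α a b (-1)) * α a b M := by group
      have e1 : α a b (-1) * α a b (M+1) = α a b (M+1) * α a b (-1) :=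
        mul_left_cancel (mul_right_cancel key)
      exact comm_shift a b e1 0 (M+2) (by ring)

include ha2 hab hbc hac in
lemma comm_alpha (i j : ℤ) : Commute (α a b i) (α a b j) := by
  have main : ∀ n : ℤ, Commute (α a b 0) (α a b n) := by
    intro n
    rcases le_or_gt 0 n with h | h
    · have := comm_a_alpha_nat a b c ha2 hab hbc hac n.toNat
      rwa [Int.toNat_of_nonneg h] at this
    · have := comm_a_alpha_nat a b c ha2 hab hbc hac (-n).toNat
      rw [Int.toNat_of_nonneg (by omega)] at this
      exact (comm_shift a b this n 0 (by ring)).symm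
  exact comm_shift a b (main (j - i)) i j (by ring)

include ha2 in
lemma alpha_sq (n : ℤ) : α a b n * α a b n = 1 := by
  have : α a b n * α a b n = b ^ n * (a * a) * b ^ (-n) := by simp only [α]; group
  rw [this, ha2, mul_one]; group

end Waux

/-! ### Facts in `BGroup` -/

namespace Baux

abbrev a : BGroup := PresentedGroup.of 0
abbrev b : BGroup := PresentedGroup.of 1
abbrev c : BGroup := PresentedGroup.of 2

lemma rel_one {r : FreeGroup (Fin 3)} (h : r ∈ Brels) :
    (PresentedGroup.mk Brels r : BGroup) = 1 :=
  (QuotientGroup.eq_one_iff _).mpr (Subgroup.subset_normalClosure h)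

lemma ha2 : a * a = 1 := by
  have := rel_one (r := FreeGroup.of (0:Fin 3) ^ 2) (by left; rfl)
  rwa [map_pow, sq] at this

lemma hab : Commute a (b⁻¹ * a * b) := by
  have h := rel_one (r := (FreeGroup.of (0:Fin 3))⁻¹ *
      ((FreeGroup.of (1:Fin 3))⁻¹ * FreeGroup.of (0:Fin 3) * FreeGroup.of (1:Fin 3))⁻¹ *
      FreeGroup.of (0:Fin 3) *
      ((FreeGroup.of (1:Fin 3))⁻¹ * FreeGroup.of (0:Fin 3) * FreeGroup.of (1:Fin 3)))
    (by right; left; rfl)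
  simp only [map_mul, map_inv] at h
  change a⁻¹ * (b⁻¹ * a * b)⁻¹ * a * (b⁻¹ * a * b) = 1 at h
  set w : BGroup := b⁻¹ * a * b with hw
  have h2 : (w * a) * (a⁻¹ * w⁻¹ * a * w) = (w * a) * 1 := by rw [h]
  rw [mul_one] at h2
  show a * w = w * a
  rw [← h2]; group

lemma hbc : b * c = c * b := by
  have h := rel_one (r := (FreeGroup.of (1:Fin 3))⁻¹ * (FreeGroup.of (2:Fin 3))⁻¹ *
      FreeGroup.of (1:Fin 3) * FreeGroup.of (2:Fin 3)) (by right; right; left; rfl)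
  simp only [map_mul, map_inv] at h
  change b⁻¹ * c⁻¹ * b * c = 1 at h
  have h2 : (c * b) * (b⁻¹ * c⁻¹ * b * c) = (c * b) * 1 := by rw [h]
  rw [mul_one] at h2
  rw [← h2]; group

lemma hac : c⁻¹ * a * c = a * (b⁻¹ * a * b) := by
  have h := rel_one (r := ((FreeGroup.of (2:Fin 3))⁻¹ * FreeGroup.of (0:Fin 3) *
        FreeGroup.of (2:Fin 3))⁻¹ *
      (FreeGroup.of (0:Fin 3) *
        ((FreeGroup.of (1:Fin 3))⁻¹ * FreeGroup.of (0:Fin 3) * FreeGroup.of (1:Fin 3))))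
    (by right; right; right; rfl)
  simp only [map_mul, map_inv] at h
  change (c⁻¹ * a * c)⁻¹ * (a * (b⁻¹ * a * b)) = 1 at h
  exact inv_mul_eq_one.mp (by rw [← h])

/-- The conjugates `b^n a b^{-n}` in `B`. -/
noncomputable abbrev αB (n : ℤ) : BGroup := Waux.α a b n

lemma alphaB_zero : αB 0 = a := Waux.alpha_zero a b

lemma commB (i j : ℤ) : Commute (αB i) (αB j) := Waux.comm_alpha a b c ha2 hab hbc hac i j

lemma alphaB_sq (n : ℤ) : αB n * αB n = 1 := Waux.alpha_sq a b ha2 n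

/-- The abelian subgroup generated by the conjugates of `a`. -/
noncomputable abbrev A : Subgroup BGroup := Subgroup.closure (Set.range αB)

noncomputable instance : CommGroup A :=
  Subgroup.closureCommGroupOfComm (by rintro x ⟨i, rfl⟩ y ⟨j, rfl⟩; exact (commB i j).eq)

lemma mem_A (n : ℤ) : αB n ∈ A := Subgroup.subset_closure ⟨n, rfl⟩

noncomputable def aA (n : ℤ) : A := ⟨αB n, mem_A n⟩

lemma aA_sq (n : ℤ) : aA n * aA n = 1 := Subtype.ext (alphaB_sq n)

/-- `ZMod 2 →+ Additive A`, `1 ↦ αB i`. -/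
noncomputable def ordTwo (i : ℤ) : ZMod 2 →+ Additive A :=
  ZMod.lift 2 ⟨zmultiplesHom (Additive A) (Additive.ofMul (aA i)), by
    rw [zmultiplesHom_apply]
    rw [show ((2:ℕ) : ℤ) • Additive.ofMul (aA i) = Additive.ofMul (aA i ^ (((2:ℕ):ℤ)))
      from (ofMul_zpow _ _).symm]
    rw [show (aA i) ^ (((2:ℕ):ℤ)) = aA i * aA i by push_cast; rw [zpow_two]]
    rw [aA_sq]; rfl⟩

lemma ordTwo_one (i : ℤ) : ordTwo i 1 = Additive.ofMul (aA i) := by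
  rw [show (1 : ZMod 2) = (((1:ℤ) : ZMod 2)) by push_cast; rfl]
  rw [ordTwo, ZMod.lift_coe, zmultiplesHom_apply, one_zsmul]

noncomputable def F : (ℤ →₀ ZMod 2) →+ Additive A := Finsupp.liftAddHom ordTwo

/-- The hom `⊕ ℤ/2 →* B`, `single i 1 ↦ αB i`. -/
noncomputable def f₁ : Multiplicative (ℤ →₀ ZMod 2) →* BGroup :=
  A.subtype.comp (AddMonoidHom.toMultiplicativeLeft F)

lemma f₁_single1 (i : ℤ) : f₁ (ofAdd (Finsupp.single i 1)) = αB i := by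
  show A.subtype ((F (Finsupp.single i 1)).toMul) = αB i
  rw [show F (Finsupp.single i 1) = ordTwo i 1 from Finsupp.liftAddHom_apply_single _ _ _,
    ordTwo_one]
  rfl

noncomputable def g₁ : Multiplicative ℤ →* BGroup := zpowersHom _ b

end Baux

/-! ### The Laurent series model -/

noncomputable section
namespace Baux
open HahnSeries

abbrev K : Type := LaurentSeries (ZMod 2)

def tpow (n : ℤ) : Kˣ where
  val := single n 1
  inv := single (-n) 1
  val_inv := by rw [single_mul_single]; simp
  inv_val := by rw [single_mul_single]; simp

@[simp] lemma tpow_val (n : ℤ) : (tpow n : K) = single n 1 := rfl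

lemma tpow_add (m n : ℤ) : tpow (m + n) = tpow m * tpow n :=
  Units.ext (by simp [single_mul_single])

@[simp] lemma tpow_zero : tpow 0 = 1 := Units.ext (by simp)

@[simp] lemma tpow_inv (n : ℤ) : (tpow n)⁻¹ = tpow (-n) := Units.ext rfl

/-- `n ↦ tpow n` as a monoid hom. -/
def Thom : Multiplicative ℤ →* Kˣ where
  toFun z := tpow (toAdd z)
  map_one' := by simp
  map_mul' x y := tpow_add _ _

lemma tpow_zpow (n k : ℤ) : (tpow n) ^ k = tpow (n * k) := by
  have : tpow n = Thom (ofAdd n) := rfl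
  rw [this, ← map_zpow, ← ofAdd_zsmul]
  simp [Thom, mul_comm]

lemma tpow_injective : Function.Injective tpow := by
  intro m n h
  have := congrArg (fun u => ((u : Kˣ) : K).coeff m) h
  by_contra hmn
  simp only [tpow_val, HahnSeries.coeff_single, if_pos, if_neg hmn] at this
  simp at this

/-- Multiplication-by-unit action on the additive group of `K`. -/
def act : Kˣ →* MulAut (Multiplicative K) :=
  { toFun := fun u => AddEquiv.toMultiplicative (DistribMulAction.toAddAut Kˣ K u),
    map_one' := by ext x; simp [AddEquiv.toMultiplicative]
    map_mul' := fun u v => by ext x; simp [AddEquiv.toMultiplicative, mul_smul] }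

@[simp] lemma act_apply (u : Kˣ) (x : K) : act u (ofAdd x) = ofAdd ((u : K) * x) := rfl

abbrev Wp := SemidirectProduct (Multiplicative K) Kˣ act

lemma two_eq_zero : (1 + 1 : K) = 0 := by
  have : (1 + 1 : K) = algebraMap (ZMod 2) K (1 + 1) := by
    rw [map_add, map_one]
  rw [this, show (1 + 1 : ZMod 2) = 0 by decide, map_zero]

def vunit : Kˣ := Units.mk0 (1 + single (1:ℤ) (1 : ZMod 2)) (by
  intro h
  have := congrArg (fun x => HahnSeries.coeff x 0) h
  simp [HahnSeries.coeff_single, HahnSeries.coeff_one] at this)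

@[simp] lemma vunit_val : (vunit : K) = 1 + single (1:ℤ) 1 := rfl

lemma zmod2_cases (m : ZMod 2) : m = 0 ∨ m = 1 := by revert m; decide

/-- Extensionality for monoid homs out of `Multiplicative (ℤ →₀ ZMod 2)`. -/
lemma mhom_ext {H : Type*} [Monoid H] {Fh G : Multiplicative (ℤ →₀ ZMod 2) →* H}
    (h : ∀ i m, Fh (ofAdd (Finsupp.single i m)) = G (ofAdd (Finsupp.single i m))) : Fh = G := by
  have h2 : AddMonoidHom.toMultiplicativeLeft.symm Fh = AddMonoidHom.toMultiplicativeLeft.symm G :=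
    Finsupp.addHom_ext fun i m => by
      show Additive.ofMul (Fh (ofAdd (Finsupp.single i m)))
        = Additive.ofMul (G (ofAdd (Finsupp.single i m)))
      rw [h]
  exact AddMonoidHom.toMultiplicativeLeft.symm.injective h2

lemma shiftAction_single (k i : ℤ) (m : ZMod 2) :
    shiftAction (ofAdd k) (ofAdd (Finsupp.single i m)) = ofAdd (Finsupp.single (i + k) m) := by
  set E0 : MulAut (Multiplicative (ℤ →₀ ZMod 2)) :=
    AddEquiv.toMultiplicative (Finsupp.domCongr (Equiv.addRight (1 : ℤ))) with hE0
  have hfwd : ∀ (j : ℤ) (m : ZMod 2), E0 (ofAdd (Finsupp.single j m)) =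
      ofAdd (Finsupp.single (j + 1) m) := by
    intro j m
    show ofAdd ((Finsupp.domCongr (Equiv.addRight (1:ℤ))) (Finsupp.single j m)) = _
    rw [Finsupp.domCongr_apply, Finsupp.equivMapDomain_single, Equiv.coe_addRight]
  have hbwd : ∀ (j : ℤ) (m : ZMod 2), E0⁻¹ (ofAdd (Finsupp.single j m)) =
      ofAdd (Finsupp.single (j - 1) m) := by
    intro j m
    rw [MulAut.inv_def, MulEquiv.symm_apply_eq, hfwd]
    norm_num
  have key : ∀ (k : ℤ) (i : ℤ) (m : ZMod 2), (E0 ^ k) (ofAdd (Finsupp.single i m)) =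
      ofAdd (Finsupp.single (i + k) m) := by
    intro k
    induction k using Int.induction_on with
    | zero => intro i m; simp
    | succ n ih => intro i m
                   rw [zpow_add_one, MulAut.mul_apply, hfwd, ih]
                   ring_nf
    | pred n ih => intro i m
                   rw [zpow_sub_one, MulAut.mul_apply, hbwd, ih]
                   ring_nf
  show (zpowersHom _ E0) (ofAdd k) (ofAdd (Finsupp.single i m)) = _
  rw [zpowersHom_apply, toAdd_ofAdd, key]

/-- The additive embedding `ℤ →₀ ZMod 2  →+  K`, `single i m ↦ single (-i) m`. -/
def jK : (ℤ →₀ ZMod 2) →+ K :=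
  Finsupp.liftAddHom fun i => (smulAddHom (ZMod 2) K).flip (single (-i) 1)

lemma jK_single (i : ℤ) (m : ZMod 2) : jK (Finsupp.single i m) = single (-i) m := by
  rw [jK, Finsupp.liftAddHom_apply_single]
  show m • (single (-i) (1 : ZMod 2)) = single (-i) m
  ext j
  rw [HahnSeries.coeff_smul, HahnSeries.coeff_single, HahnSeries.coeff_single]
  split_ifs <;> simp

lemma jK_coeff (f : ℤ →₀ ZMod 2) (i : ℤ) : (jK f).coeff (-i) = f i := by
  induction f using Finsupp.induction with
  | zero => simp
  | single_add a bb f _ _ ih =>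
    rw [map_add, HahnSeries.coeff_add, jK_single, Finsupp.add_apply, ih,
      Finsupp.single_apply, HahnSeries.coeff_single]
    by_cases h : a = i
    · simp [h]
    · rw [if_neg (by omega), if_neg (by omega)]

lemma jK_injective : Function.Injective jK := fun f g h =>
  Finsupp.ext fun i => by rw [← jK_coeff, ← jK_coeff, h]

def jmul : Multiplicative (ℤ →₀ ZMod 2) →* Multiplicative K :=
  AddMonoidHom.toMultiplicative jK

lemma jmul_apply (f : ℤ →₀ ZMod 2) : jmul (ofAdd f) = ofAdd (jK f) := rfl

def gmul : Multiplicative ℤ →* Kˣ := Thom.comp invMonoidHom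

lemma gmul_apply (k : ℤ) : gmul (ofAdd k) = tpow (-k) := by
  show Thom (invMonoidHom (ofAdd k)) = _
  rw [invMonoidHom_apply, ← ofAdd_neg]
  rfl

end Baux
end

noncomputable section
namespace Baux
open SemidirectProduct

/-- Reducible synonym for `Wreath`. -/
abbrev Wr := SemidirectProduct (Multiplicative (ℤ →₀ ZMod 2)) (Multiplicative ℤ) shiftAction

/-! ### The homomorphism `B →* Wp` -/

def fimg : Fin 3 → Wp
  | 0 => inl (ofAdd (1 : K))
  | 1 => inr (tpow (-1))
  | 2 => inr vunit⁻¹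

lemma comm_conj_one {M : Type*} [CommGroup M] (u v : M) : u⁻¹ * v⁻¹ * u * v = 1 := by
  rw [mul_assoc, mul_mul_mul_comm, inv_mul_cancel, inv_mul_cancel, one_mul]

lemma comm_conj_one_units (u v : Kˣ) : u⁻¹ * v⁻¹ * u * v = 1 := comm_conj_one u v

lemma linv (x : Multiplicative K) : (inl x : Wp)⁻¹ = inl x⁻¹ := (map_inv _ _).symm
lemma lmul (x y : Multiplicative K) : (inl x : Wp) * inl y = inl (x * y) := (map_mul _ _ _).symm
lemma rinv (x : Kˣ) : (inr x : Wp)⁻¹ = inr x⁻¹ := (map_inv _ _).symm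
lemma rmul (x y : Kˣ) : (inr x : Wp) * inr y = inr (x * y) := (map_mul _ _ _).symm

lemma hBA : (inr (tpow (-1)) : Wp)⁻¹ * inl (ofAdd (1:K)) * inr (tpow (-1))
    = inl (ofAdd (HahnSeries.single (1:ℤ) (1 : ZMod 2))) := by
  rw [rinv, ← SemidirectProduct.inl_aut_inv]
  congr 1
  rw [← map_inv, tpow_inv, neg_neg, act_apply, tpow_val, mul_one]

lemma hCA : (inr vunit⁻¹ : Wp)⁻¹ * inl (ofAdd (1:K)) * inr vunit⁻¹
    = inl (ofAdd ((1 : K) + HahnSeries.single (1:ℤ) 1)) := by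
  rw [rinv, ← SemidirectProduct.inl_aut_inv]
  congr 1
  rw [← map_inv, inv_inv, act_apply, vunit_val, mul_one]

lemma hrels : ∀ r ∈ Brels, FreeGroup.lift fimg r = 1 := by
  intro r hr
  simp only [Brels, Set.mem_insert_iff, Set.mem_singleton_iff] at hr
  rcases hr with rfl | rfl | rfl | rfl
  · rw [map_pow, FreeGroup.lift_apply_of]
    show (inl (ofAdd (1:K))) ^ 2 = 1
    rw [← map_pow, sq, ← ofAdd_add, two_eq_zero, ofAdd_zero, map_one]
  · simp only [map_mul, map_inv, FreeGroup.lift_apply_of]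
    show (inl (ofAdd (1:K)))⁻¹ *
        ((inr (tpow (-1)))⁻¹ * inl (ofAdd (1:K)) * inr (tpow (-1)))⁻¹ *
        inl (ofAdd (1:K)) *
        ((inr (tpow (-1)))⁻¹ * inl (ofAdd (1:K)) * inr (tpow (-1))) = 1
    rw [hBA, linv, linv, lmul, lmul, lmul, comm_conj_one, map_one]
  · simp only [map_mul, map_inv, FreeGroup.lift_apply_of]
    show (inr (tpow (-1)) : Wp)⁻¹ * (inr vunit⁻¹)⁻¹ * inr (tpow (-1)) * inr vunit⁻¹ = 1
    rw [rinv, rinv, rmul, rmul, rmul, comm_conj_one_units, map_one]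
  · simp only [map_mul, map_inv, FreeGroup.lift_apply_of]
    show ((inr vunit⁻¹ : Wp)⁻¹ * inl (ofAdd (1:K)) * inr vunit⁻¹)⁻¹ *
        (inl (ofAdd (1:K)) *
          ((inr (tpow (-1)))⁻¹ * inl (ofAdd (1:K)) * inr (tpow (-1)))) = 1
    rw [hBA, hCA, linv, lmul, lmul, ← ofAdd_add, inv_mul_cancel, map_one]

def Φ : BGroup →* Wp := PresentedGroup.toGroup hrels

lemma Φa : Φ a = inl (ofAdd (1:K)) := PresentedGroup.toGroup.of hrels
lemma Φb : Φ b = inr (tpow (-1)) := PresentedGroup.toGroup.of hrels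

/-! ### The homomorphism `Wr →* B` -/

lemma hcompat : ∀ z : Multiplicative ℤ, f₁.comp ((shiftAction z).toMonoidHom)
    = (MulAut.conj (g₁ z)).toMonoidHom.comp f₁ := by
  intro z
  apply mhom_ext
  intro i m
  rcases zmod2_cases m with rfl | rfl
  · rw [Finsupp.single_zero, ofAdd_zero]
    simp
  · simp only [MonoidHom.comp_apply, MulEquiv.coe_toMonoidHom]
    rw [show (shiftAction z) (ofAdd (Finsupp.single i 1))
        = ofAdd (Finsupp.single (i + toAdd z) 1) from shiftAction_single (toAdd z) i 1,
      f₁_single1, f₁_single1, MulAut.conj_apply]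
    show αB (i + toAdd z) = g₁ z * αB i * (g₁ z)⁻¹
    rw [show g₁ z = b ^ (toAdd z) from zpowersHom_apply _ _ _, Waux.conj_alpha]

def ψ : Wr →* BGroup := SemidirectProduct.lift f₁ g₁ hcompat

lemma ψ_inl_single (i : ℤ) : ψ (inl (ofAdd (Finsupp.single i 1))) = αB i := by
  rw [ψ, SemidirectProduct.lift_inl, f₁_single1]

lemma ψ_inr (z : Multiplicative ℤ) : ψ (inr z) = b ^ (toAdd z) := by
  rw [ψ, SemidirectProduct.lift_inr]
  exact zpowersHom_apply _ _ _

/-! ### `Φ ∘ ψ` is the standard embedding -/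

lemma gmul_apply' (z : Multiplicative ℤ) : gmul z = tpow (-(toAdd z)) := gmul_apply (toAdd z)

lemma hcmpE : ∀ z : Multiplicative ℤ, jmul.comp ((shiftAction z).toMonoidHom)
    = (act (gmul z)).toMonoidHom.comp jmul := by
  intro z
  apply mhom_ext
  intro i m
  rcases zmod2_cases m with rfl | rfl
  · rw [Finsupp.single_zero, ofAdd_zero]
    simp
  · simp only [MonoidHom.comp_apply, MulEquiv.coe_toMonoidHom]
    rw [show (shiftAction z) (ofAdd (Finsupp.single i 1))
        = ofAdd (Finsupp.single (i + toAdd z) 1) from shiftAction_single (toAdd z) i 1,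
      jmul_apply, jmul_apply, jK_single, jK_single, gmul_apply', act_apply, tpow_val,
      HahnSeries.single_mul_single, one_mul]
    rw [show -(toAdd z) + -i = -(i + toAdd z) from by ring]

abbrev E : Wr →* Wp := SemidirectProduct.map jmul gmul hcmpE

lemma hΦψ : Φ.comp ψ = E := by
  apply SemidirectProduct.hom_ext
  · apply mhom_ext
    intro i m
    rcases zmod2_cases m with rfl | rfl
    · rw [Finsupp.single_zero, ofAdd_zero]
      simp
    · simp only [MonoidHom.comp_apply]
      rw [ψ_inl_single, SemidirectProduct.map_inl, jmul_apply, jK_single]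
      show Φ (b ^ i * a * b ^ (-i)) = _
      rw [map_mul, map_mul, map_zpow, map_zpow, Φa, Φb, ← map_zpow, ← map_zpow,
        tpow_zpow, tpow_zpow]
      rw [show (-1 : ℤ) * i = -i by ring, show (-1 : ℤ) * (-i) = i by ring,
        show (inr (tpow i) : Wp) = inr (tpow (-i))⁻¹ by rw [tpow_inv, neg_neg]]
      rw [← SemidirectProduct.inl_aut, act_apply, tpow_val, mul_one]
  · apply MonoidHom.ext_mint
    simp only [MonoidHom.comp_apply]
    rw [ψ_inr, SemidirectProduct.map_inr, gmul_apply, toAdd_ofAdd, zpow_one, Φb]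

lemma jmul_injective : Function.Injective jmul := by
  intro x y h
  have := jK_injective (Multiplicative.ofAdd.injective h : jK x.toAdd = jK y.toAdd)
  exact Multiplicative.toAdd.injective this

lemma gmul_injective : Function.Injective gmul := by
  intro x y h
  rw [gmul_apply', gmul_apply'] at h
  have h2 := tpow_injective h
  have h3 : toAdd x = toAdd y := by omega
  exact Multiplicative.toAdd.injective h3

lemma hEinj : Function.Injective E := by
  rw [injective_iff_map_eq_one]
  intro w hw
  have hl : jmul w.left = 1 := by
    have := congrArg SemidirectProduct.left hw
    rwa [SemidirectProduct.map_left, SemidirectProduct.one_left] at this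
  have hr : gmul w.right = 1 := by
    have := congrArg SemidirectProduct.right hw
    rwa [SemidirectProduct.map_right, SemidirectProduct.one_right] at this
  have h1 : w.left = 1 := jmul_injective (by rw [hl, map_one])
  have h2 : w.right = 1 := gmul_injective (by rw [hr, map_one])
  exact SemidirectProduct.ext h1 h2

lemma hψinj : Function.Injective ψ := by
  have h : Function.Injective (Φ.comp ψ) := by rw [hΦψ]; exact hEinj
  intro x y hxy
  exact h (by simp only [MonoidHom.comp_apply, hxy])

/-! ### The range of `ψ` -/

lemma hrange : ψ.range = Subgroup.closure {a, b} := by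
  have hamem : a ∈ Subgroup.closure ({a, b} : Set BGroup) :=
    Subgroup.subset_closure (by simp)
  have hbmem : b ∈ Subgroup.closure ({a, b} : Set BGroup) :=
    Subgroup.subset_closure (by simp)
  apply le_antisymm
  · rintro x ⟨w, rfl⟩
    rw [← SemidirectProduct.inl_left_mul_inr_right w, map_mul]
    apply Subgroup.mul_mem
    · have main : ∀ f : ℤ →₀ ZMod 2, ψ (inl (ofAdd f)) ∈ Subgroup.closure {a, b} := by
        intro f
        induction f using Finsupp.induction with
        | zero => rw [ofAdd_zero, map_one, map_one]; exact one_mem _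
        | single_add i m f _ hm ih =>
          rw [ofAdd_add, map_mul, map_mul]
          apply Subgroup.mul_mem _ _ ih
          rcases zmod2_cases m with rfl | rfl
          · exact absurd rfl hm
          · rw [ψ_inl_single]
            exact Subgroup.mul_mem _
              (Subgroup.mul_mem _ (Subgroup.zpow_mem _ hbmem i) hamem)
              (Subgroup.zpow_mem _ hbmem (-i))
      exact main (toAdd w.left)
    · rw [ψ_inr]
      exact Subgroup.zpow_mem _ hbmem _
  · rw [Subgroup.closure_le]
    rintro x (rfl | rfl)
    · exact ⟨inl (ofAdd (Finsupp.single 0 1)), by rw [ψ_inl_single]; exact alphaB_zero⟩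
    · exact ⟨inr (ofAdd 1), by rw [ψ_inr, toAdd_ofAdd, zpow_one]⟩

lemma subgroupCongr_coe {G : Type*} [Group G] {H K : Subgroup G} (h : H = K) (x : H) :
    ((MulEquiv.subgroupCongr h) x).val = x.val := by subst h; rfl

def E₀ : Wreath ≃* (Subgroup.closure ({a, b} : Set BGroup)) :=
  (MonoidHom.ofInjective hψinj).trans (MulEquiv.subgroupCongr hrange)

lemma E₀_coe (w : Wr) : (E₀ w).val = ψ w := by
  show ((MulEquiv.subgroupCongr hrange) ((MonoidHom.ofInjective hψinj) w)).val = ψ w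
  rw [subgroupCongr_coe, MonoidHom.ofInjective_apply]

end Baux
end

/-- The subgroup `⟨a,b⟩` of `B` is isomorphic to `(ℤ/2ℤ) ≀ ℤ` via `a ↦` the generator of
the `0`-th copy of `ℤ/2ℤ` and `b ↦` the generator of `ℤ`. -/
theorem baumslag_subgroup_iso_wreath :
    ∃ e : (Subgroup.closure {(PresentedGroup.of 0 : BGroup), PresentedGroup.of 1}) ≃*
        Wreath,
      e ⟨PresentedGroup.of 0, Subgroup.subset_closure (by simp)⟩ =
          SemidirectProduct.inl (ofAdd (Finsupp.single (0 : ℤ) (1 : ZMod 2))) ∧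
      e ⟨PresentedGroup.of 1, Subgroup.subset_closure (by simp)⟩ =
          SemidirectProduct.inr (ofAdd (1 : ℤ)) := by
  refine ⟨Baux.E₀.symm, ?_, ?_⟩
  · apply (MulEquiv.symm_apply_eq _).mpr
    apply Subtype.ext
    refine Eq.trans ?_ (Baux.E₀_coe _).symm
    rw [Baux.ψ_inl_single]
    exact Baux.alphaB_zero.symm
  · apply (MulEquiv.symm_apply_eq _).mpr
    apply Subtype.ext
    refine Eq.trans ?_ (Baux.E₀_coe _).symm
    rw [Baux.ψ_inr, toAdd_ofAdd, zpow_one]
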